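/- Let δ ∈ {0,1} and let α ≥ 3 be an integer. Let s be an integer, t = 2s+δ, v = s+α, c = s+δ+2−α (so c = t+2−v) and r = 2α−δ−2 (so r = v−c). Let l be a positive integer such that there exist integers k₁,…,k_r, each at least r, with k₁+⋯+k_r = l, and suppose there exists an (r; r−2)-coloring of the complete graph on c vertices containing no monochromatic clique of k_h+1 vertices in color h for every h ∈ {1,…,r} (i.e., c < R^{r−2}(k₁+1,…,k_r+1)). Then there exists an (N, v, t)-suitable core with N = v(c−1) + l. -/

import Mathlib

/-- An `(N, w, t)`-suitable core: an `N × w` array whose rows are permutations of `{1,…,w}`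
(row `i`, position `j` holds symbol `C i j`) such that for each `s` with `0 ≤ s ≤ t−1`,
each symbol precedes each set of `s` other symbols in at least `t − s` rows. -/
def IsSuitableCore (N w t : ℕ) (C : Fin N → Equiv.Perm (Fin w)) : Prop :=
  ∀ (σ : Fin w) (T : Finset (Fin w)), σ ∉ T → T.card < t →
    t - T.card ≤ (Finset.univ.filter fun i : Fin N =>
      ∀ τ ∈ T, (C i).symm σ < (C i).symm τ).card

def SuitableCoreExists (N w t : ℕ) : Prop :=
  ∃ C : Fin N → Equiv.Perm (Fin w), IsSuitableCore N w t C

/-- In an edge-coloring of the complete graph on `Fin n` assigning each edge a set of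
colors from `Fin r`, `HasMonoClique χ i k` says there is a clique of `k` vertices all
of whose edges have color `i` in their assigned set. -/
def HasMonoClique {n r : ℕ} (χ : Sym2 (Fin n) → Finset (Fin r)) (i : Fin r) (k : ℕ) : Prop :=
  ∃ W : Finset (Fin n), W.card = k ∧ ∀ a ∈ W, ∀ b ∈ W, a ≠ b → i ∈ χ s(a, b)

def skipf (c : ℕ) (u : Fin c) (m : ℕ) : Fin c :=
  if h : m + 1 < c then
    (if m < u.1 then ⟨m, by omega⟩ else ⟨m + 1, h⟩)
  else u

lemma skipf_val {c : ℕ} {u : Fin c} {m : ℕ} (h : m + 1 < c) :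
    (skipf c u m).1 = if m < u.1 then m else m + 1 := by
  unfold skipf; rw [dif_pos h]; split_ifs <;> rfl

lemma skipf_ne {c : ℕ} {u : Fin c} {m : ℕ} (h : m + 1 < c) : skipf c u m ≠ u := by
  have hv := skipf_val (u := u) h
  intro he; rw [he] at hv; split_ifs at hv <;> omega

lemma skipf_inj {c : ℕ} {u : Fin c} {m m' : ℕ} (h : m + 1 < c) (h' : m' + 1 < c)
    (he : skipf c u m = skipf c u m') : m = m' := by
  have h1 := skipf_val (u := u) h
  have h2 := skipf_val (u := u) h'
  rw [he, h2] at h1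
  split_ifs at h1 <;> omega

lemma skipf_surj {c : ℕ} {u w : Fin c} (hw : w ≠ u) :
    ∃ m : ℕ, m + 1 < c ∧ skipf c u m = w := by
  have hval : w.1 ≠ u.1 := fun h => hw (Fin.ext h)
  have hwlt := w.2
  have hult := u.2
  rcases lt_or_gt_of_ne hval with hlt | hgt
  · refine ⟨w.1, by omega, ?_⟩
    have hv := skipf_val (u := u) (m := w.1) (by omega)
    exact Fin.ext (by rw [hv, if_pos hlt])
  · refine ⟨w.1 - 1, by omega, ?_⟩
    have hv := skipf_val (u := u) (m := w.1 - 1) (by omega)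
    exact Fin.ext (by rw [hv, if_neg (by omega)]; omega)

lemma exists_perm3 {v : ℕ} (hv : 3 ≤ v) (a b x : Fin v) (hab : a ≠ b) (hax : a ≠ x)
    (hbx : b ≠ x) :
    ∃ π : Equiv.Perm (Fin v),
      (π.symm a).1 = 0 ∧ (π.symm b).1 = 1 ∧ (π.symm x).1 = 2 := by
  have h0v : 0 < v := by omega
  have h1v : 1 < v := by omega
  have h2v : 2 < v := by omega
  set f0 : Fin v := ⟨0, h0v⟩ with hf0
  set f1 : Fin v := ⟨1, h1v⟩ with hf1
  set f2 : Fin v := ⟨2, h2v⟩ with hf2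
  have h01 : f0 ≠ f1 := by simp [hf0, hf1, Fin.ext_iff]
  have h02 : f0 ≠ f2 := by simp [hf0, hf2, Fin.ext_iff]
  have h12 : f1 ≠ f2 := by simp [hf1, hf2, Fin.ext_iff]
  have hb1 : Equiv.swap f0 a b ≠ f0 := by
    intro h
    have h2 := congrArg (Equiv.swap f0 a) h
    rw [Equiv.swap_apply_self, Equiv.swap_apply_left] at h2
    exact hab h2.symm
  have hx2a : Equiv.swap f1 (Equiv.swap f0 a b) (Equiv.swap f0 a x) ≠ f0 := by
    intro h
    have h2 := congrArg (Equiv.swap f1 (Equiv.swap f0 a b)) h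
    rw [Equiv.swap_apply_self, Equiv.swap_apply_of_ne_of_ne h01 (Ne.symm hb1)] at h2
    have h3 := congrArg (Equiv.swap f0 a) h2
    rw [Equiv.swap_apply_self, Equiv.swap_apply_left] at h3
    exact hax h3.symm
  have hx2b : Equiv.swap f1 (Equiv.swap f0 a b) (Equiv.swap f0 a x) ≠ f1 := by
    intro h
    have h2 := congrArg (Equiv.swap f1 (Equiv.swap f0 a b)) h
    rw [Equiv.swap_apply_self, Equiv.swap_apply_left] at h2
    have h3 := congrArg (Equiv.swap f0 a) h2
    rw [Equiv.swap_apply_self, Equiv.swap_apply_self] at h3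
    exact hbx h3.symm
  refine ⟨((Equiv.swap f2 (Equiv.swap f1 (Equiv.swap f0 a b) (Equiv.swap f0 a x))).trans
    (Equiv.swap f1 (Equiv.swap f0 a b))).trans (Equiv.swap f0 a), ?_, ?_, ?_⟩
  · have hval : (((Equiv.swap f2 (Equiv.swap f1 (Equiv.swap f0 a b) (Equiv.swap f0 a x))).trans
        (Equiv.swap f1 (Equiv.swap f0 a b))).trans (Equiv.swap f0 a)) f0 = a := by
      rw [Equiv.trans_apply, Equiv.trans_apply,
        Equiv.swap_apply_of_ne_of_ne h02 (Ne.symm hx2a),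
        Equiv.swap_apply_of_ne_of_ne h01 (Ne.symm hb1), Equiv.swap_apply_left]
    have : (((Equiv.swap f2 (Equiv.swap f1 (Equiv.swap f0 a b) (Equiv.swap f0 a x))).trans
        (Equiv.swap f1 (Equiv.swap f0 a b))).trans (Equiv.swap f0 a)).symm a = f0 := by
      rw [Equiv.symm_apply_eq, hval]
    rw [this]
  · have hval : (((Equiv.swap f2 (Equiv.swap f1 (Equiv.swap f0 a b) (Equiv.swap f0 a x))).trans
        (Equiv.swap f1 (Equiv.swap f0 a b))).trans (Equiv.swap f0 a)) f1 = b := by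
      rw [Equiv.trans_apply, Equiv.trans_apply,
        Equiv.swap_apply_of_ne_of_ne h12 (Ne.symm hx2b),
        Equiv.swap_apply_left, Equiv.swap_apply_self]
    have : (((Equiv.swap f2 (Equiv.swap f1 (Equiv.swap f0 a b) (Equiv.swap f0 a x))).trans
        (Equiv.swap f1 (Equiv.swap f0 a b))).trans (Equiv.swap f0 a)).symm b = f1 := by
      rw [Equiv.symm_apply_eq, hval]
    rw [this]
  · have hval : (((Equiv.swap f2 (Equiv.swap f1 (Equiv.swap f0 a b) (Equiv.swap f0 a x))).trans
        (Equiv.swap f1 (Equiv.swap f0 a b))).trans (Equiv.swap f0 a)) f2 = x := by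
      rw [Equiv.trans_apply, Equiv.trans_apply, Equiv.swap_apply_left,
        Equiv.swap_apply_self, Equiv.swap_apply_self]
    have : (((Equiv.swap f2 (Equiv.swap f1 (Equiv.swap f0 a b) (Equiv.swap f0 a x))).trans
        (Equiv.swap f1 (Equiv.swap f0 a b))).trans (Equiv.swap f0 a)).symm x = f2 := by
      rw [Equiv.symm_apply_eq, hval]
    rw [this]

lemma exists_perm2 {v : ℕ} (hv : 3 ≤ v) (a b : Fin v) (hab : a ≠ b) :
    ∃ π : Equiv.Perm (Fin v), (π.symm a).1 = 0 ∧ (π.symm b).1 = 1 := by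
  have hex : ∃ x : Fin v, a ≠ x ∧ b ≠ x := by
    by_contra h
    push_neg at h
    by_cases e0 : a = ⟨0, by omega⟩
    · have hb1 := h ⟨1, by omega⟩ (by rw [e0]; simp [Fin.ext_iff])
      have hb2 := h ⟨2, by omega⟩ (by rw [e0]; simp [Fin.ext_iff])
      rw [hb1] at hb2
      simp [Fin.ext_iff] at hb2
    · have hb0 := h ⟨0, by omega⟩ e0
      by_cases e1 : a = ⟨1, by omega⟩
      · have hb2 := h ⟨2, by omega⟩ (by rw [e1]; simp [Fin.ext_iff])
        rw [hb0] at hb2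
        simp [Fin.ext_iff] at hb2
      · have hb1 := h ⟨1, by omega⟩ e1
        rw [hb0] at hb1
        simp [Fin.ext_iff] at hb1
  obtain ⟨x, hax, hbx⟩ := hex
  obtain ⟨π, h1, h2, _⟩ := exists_perm3 hv a b x hab hax hbx
  exact ⟨π, h1, h2⟩

lemma indep_bound {c r : ℕ} (χ : Sym2 (Fin c) → Finset (Fin r)) (h : Fin r) (kh : ℕ)
    (hmono : ¬ HasMonoClique χ h (kh + 1)) (S : Finset (Fin c)) :
    S.card ≤ ((S ×ˢ S).filter fun p => p.1 < p.2 ∧ h ∉ χ s(p.1, p.2)).card + kh := by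
  classical
  induction S using Finset.strongInduction with
  | _ S ih =>
  by_cases hedge : ∃ p ∈ S ×ˢ S, p.1 < p.2 ∧ h ∉ χ s(p.1, p.2)
  · obtain ⟨⟨a, b⟩, hpmem, hprop⟩ := hedge
    have haS : a ∈ S := (Finset.mem_product.mp hpmem).1
    have hsub : S.erase a ⊂ S := Finset.erase_ssubset haS
    have hIH := ih _ hsub
    have hfsub : ((S.erase a ×ˢ S.erase a).filter fun p => p.1 < p.2 ∧ h ∉ χ s(p.1, p.2)) ⊂
        ((S ×ˢ S).filter fun p => p.1 < p.2 ∧ h ∉ χ s(p.1, p.2)) := by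
      constructor
      · apply Finset.filter_subset_filter _
        exact Finset.product_subset_product hsub.subset hsub.subset
      · intro hcon
        have hmem2 : (a, b) ∈ (S.erase a ×ˢ S.erase a).filter
            (fun p => p.1 < p.2 ∧ h ∉ χ s(p.1, p.2)) :=
          hcon (Finset.mem_filter.mpr ⟨hpmem, hprop⟩)
        have := (Finset.mem_product.mp (Finset.mem_filter.mp hmem2).1).1
        exact (Finset.notMem_erase a S) this
    have hflt := Finset.card_lt_card hfsub
    have hcerase : (S.erase a).card = S.card - 1 := Finset.card_erase_of_mem haS
    have hSpos : 1 ≤ S.card := Finset.card_pos.mpr ⟨a, haS⟩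
    omega
  · push_neg at hedge
    by_cases hS : S.card ≤ kh
    · omega
    · exfalso
      obtain ⟨W, hWsub, hWcard⟩ := Finset.exists_subset_card_eq (s := S) (n := kh + 1) (by omega)
      apply hmono
      refine ⟨W, hWcard, fun a ha b hb hab => ?_⟩
      rcases lt_or_gt_of_ne hab with hlt | hgt
      · exact hedge (a, b) (Finset.mem_product.mpr ⟨hWsub ha, hWsub hb⟩) hlt
      · rw [Sym2.eq_swap]
        exact hedge (b, a) (Finset.mem_product.mpr ⟨hWsub hb, hWsub ha⟩) hgt

abbrev pIdx (c r : ℕ) (k : Fin r → ℕ) : Type :=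
  (Fin c × Fin (c - 1)) ⊕ (Σ h : Fin r, Fin (c - 1 + k h))

theorem main_core (c r t l : ℕ) (hr : 3 ≤ r) (ht : t + 2 = 2 * c + r)
    (k : Fin r → ℕ) (hk : ∀ h, r ≤ k h) (hsum : ∑ h, k h = l)
    (χ : Sym2 (Fin c) → Finset (Fin r)) (hχ : ∀ e, (χ e).card = r - 2)
    (hmono : ∀ h : Fin r, ¬ HasMonoClique χ h (k h + 1)) :
    SuitableCoreExists ((c + r) * (c - 1) + l) (c + r) t := by
  classical
  have hv3 : 3 ≤ c + r := by omega
  -- symbols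
  set vsy : Fin c → Fin (c + r) := fun u => ⟨u.1, Nat.lt_of_lt_of_le u.2 (Nat.le_add_right c r)⟩
    with hvsy
  set csy : Fin r → Fin (c + r) := fun h => ⟨c + h.1, Nat.add_lt_add_left h.2 c⟩ with hcsy
  have vsy_inj : Function.Injective vsy := by
    intro a b h
    have := congrArg Fin.val h
    exact Fin.ext this
  have csy_inj : Function.Injective csy := by
    intro a b h
    have h2 : c + a.1 = c + b.1 := congrArg Fin.val h
    exact Fin.ext (by omega)
  have vsy_ne_csy : ∀ u h, vsy u ≠ csy h := by
    intro u h he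
    have h2 : u.1 = c + h.1 := congrArg Fin.val he
    have := u.2
    omega
  -- missing-color pairs
  have hMcard : ∀ u w : Fin c, ((χ s(u, w))ᶜ : Finset (Fin r)).card = 2 := by
    intro u w
    rw [Finset.card_compl, hχ, Fintype.card_fin]
    omega
  have hMne : ∀ u w : Fin c, ((χ s(u, w))ᶜ : Finset (Fin r)).Nonempty := by
    intro u w
    rw [← Finset.card_pos, hMcard]
    omega
  set θ : Fin c → Fin c → Fin r := fun u w =>
    if u.1 ≤ w.1 then ((χ s(u, w))ᶜ).min' (hMne u w) else ((χ s(u, w))ᶜ).max' (hMne u w)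
    with hθdef
  have θ_cases : ∀ u w : Fin c, u.1 < w.1 → ∀ h' : Fin r, h' ∉ χ s(u, w) →
      θ u w = h' ∨ θ w u = h' := by
    intro u w hlt h' hh
    have hm : h' ∈ ((χ s(u, w))ᶜ : Finset (Fin r)) := Finset.mem_compl.mpr hh
    have hmm : h' = ((χ s(u, w))ᶜ).min' (hMne u w) ∨ h' = ((χ s(u, w))ᶜ).max' (hMne u w) := by
      by_contra hcon
      push_neg at hcon
      have hlt1 : ((χ s(u, w))ᶜ).min' (hMne u w) < h' :=
        lt_of_le_of_ne (Finset.min'_le _ _ hm) (fun e => hcon.1 e.symm)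
      have hlt2 : h' < ((χ s(u, w))ᶜ).max' (hMne u w) :=
        lt_of_le_of_ne (Finset.le_max' _ _ hm) hcon.2
      have hsub : ({((χ s(u, w))ᶜ).min' (hMne u w), h', ((χ s(u, w))ᶜ).max' (hMne u w)} :
          Finset (Fin r)) ⊆ (χ s(u, w))ᶜ := by
        intro y hy
        simp only [Finset.mem_insert, Finset.mem_singleton] at hy
        rcases hy with rfl | rfl | rfl
        · exact Finset.min'_mem _ _
        · exact hm
        · exact Finset.max'_mem _ _
      have hc3 : ({((χ s(u, w))ᶜ).min' (hMne u w), h', ((χ s(u, w))ᶜ).max' (hMne u w)} :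
          Finset (Fin r)).card = 3 := by
        rw [Finset.card_insert_of_notMem, Finset.card_insert_of_notMem,
          Finset.card_singleton]
        · simp only [Finset.mem_singleton]
          exact ne_of_lt hlt2
        · simp only [Finset.mem_insert, Finset.mem_singleton]
          push_neg
          exact ⟨ne_of_lt hlt1, ne_of_lt (lt_trans hlt1 hlt2)⟩
      have hle := Finset.card_le_card hsub
      rw [hc3, hMcard] at hle
      omega
    have hswap : (χ s(w, u))ᶜ = (χ s(u, w))ᶜ := by rw [Sym2.eq_swap]
    rcases hmm with he | he
    · left
      rw [hθdef]
      simp only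
      rw [if_pos (le_of_lt hlt)]
      exact he.symm
    · right
      have hswap2 : s(w, u) = s(u, w) := Sym2.eq_swap
      rw [hθdef]
      simp only
      rw [if_neg (by omega)]
      simp_rw [hswap2]
      exact he.symm
  -- rows of type A
  have hA : ∀ (u : Fin c) (m : Fin (c - 1)), ∃ π : Equiv.Perm (Fin (c + r)),
      (π.symm (vsy u)).1 = 0 ∧ (π.symm (vsy (skipf c u m.1))).1 = 1 ∧
      (π.symm (csy (θ u (skipf c u m.1)))).1 = 2 := by
    intro u m
    have hm : m.1 + 1 < c := by have := m.2; omega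
    refine exists_perm3 hv3 _ _ _ ?_ ?_ ?_
    · intro he
      exact skipf_ne hm (vsy_inj he).symm
    · exact vsy_ne_csy u _
    · exact vsy_ne_csy _ _
  choose gA hA0 hA1 hA2 using hA
  -- rows of type B
  set secv : Fin r → ℕ → Fin (c + r) := fun h j => skipf (c + r) (csy h) (min j (c + r - 2))
    with hsecv
  have hsecv_ne : ∀ h j, secv h j ≠ csy h := by
    intro h j
    exact skipf_ne (by omega)
  have hB : ∀ (h : Fin r) (j : ℕ), ∃ π : Equiv.Perm (Fin (c + r)),
      (π.symm (csy h)).1 = 0 ∧ (π.symm (secv h j)).1 = 1 :=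
    fun h j => exists_perm2 hv3 _ _ (Ne.symm (hsecv_ne h j))
  choose gB hB0 hB1 using hB
  have hsel2 : ∀ (h : Fin r) (y : Fin (c + r)), y ≠ csy h →
      ∃ j : Fin (c - 1 + k h), secv h j.1 = y := by
    intro h y hy
    obtain ⟨m, hm1, hm2⟩ := skipf_surj hy
    have hkh := hk h
    refine ⟨⟨m, by omega⟩, ?_⟩
    rw [hsecv]
    simp only
    rw [min_eq_left (by omega : m ≤ c + r - 2)]
    exact hm2
  -- the array
  set g : pIdx c r k → Equiv.Perm (Fin (c + r)) :=
    Sum.elim (fun p => gA p.1 p.2) (fun x => gB x.1 x.2.1) with hg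
  have hcardK : Fintype.card (pIdx c r k) = (c + r) * (c - 1) + l := by
    simp only [pIdx, Fintype.card_sum, Fintype.card_prod, Fintype.card_fin,
      Fintype.card_sigma]
    rw [Finset.sum_add_distrib, Finset.sum_const, Finset.card_univ, Fintype.card_fin,
      hsum, smul_eq_mul, add_mul]
    omega
  obtain ⟨emb⟩ : Nonempty (pIdx c r k ↪ Fin ((c + r) * (c - 1) + l)) := by
    apply Function.Embedding.nonempty_of_card_le
    rw [hcardK, Fintype.card_fin]
  refine ⟨fun n => Function.extend emb g (fun _ => 1) n, ?_⟩
  intro σ T hσT hTt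
  suffices hKcount : t - T.card ≤ (Finset.univ.filter fun i : pIdx c r k =>
      ∀ τ ∈ T, ((g i).symm σ < (g i).symm τ)).card by
    refine le_trans hKcount (Finset.card_le_card_of_injOn emb ?_ (emb.injective.injOn))
    intro i hi
    simp only [Finset.mem_coe, Finset.mem_filter, Finset.mem_univ, true_and] at hi ⊢
    intro τ hτ
    rw [Function.Injective.extend_apply emb.injective]
    exact hi τ hτ
  -- counting helpers
  have lt_of : ∀ (π : Equiv.Perm (Fin (c + r))) (τ : Fin (c + r)) (n : ℕ), τ ≠ σ →
      (π.symm σ).1 = n → (∀ y : Fin (c + r), (π.symm y).1 < n → τ ≠ y) →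
      π.symm σ < π.symm τ := by
    intro π τ n hτσ hn hbelow
    rcases lt_trichotomy (π.symm τ) (π.symm σ) with hlt | heq | hgt
    · exact absurd rfl (hbelow τ (by rw [Fin.lt_def] at hlt; omega))
    · exact absurd (π.symm.injective heq) hτσ
    · exact hgt
  have val_inj : ∀ (π : Equiv.Perm (Fin (c + r))) (y z : Fin (c + r)),
      ((π.symm y)).1 = ((π.symm z)).1 → y = z :=
    fun π y z h => π.symm.injective (Fin.ext h)
  set Tv := T.filter (fun τ => τ.1 < c) with hTvdef
  set Tc := T.filter (fun τ => ¬ τ.1 < c) with hTcdef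
  have hTvc : Tv.card + Tc.card = T.card := by
    rw [hTvdef, hTcdef]
    exact Finset.card_filter_add_card_filter_not (fun τ : Fin (c + r) => τ.1 < c)
  by_cases hσc : σ.1 < c
  · -- vertex symbol case
    set u : Fin c := ⟨σ.1, hσc⟩ with hu
    have hσu : σ = vsy u := Fin.ext rfl
    set W2A := Finset.univ.filter (fun w : Fin c => vsy w ∉ T ∧ w ≠ u) with hW2Adef
    set W2B := Finset.univ.filter (fun h' : Fin r => csy h' ∉ T) with hW2Bdef
    have hW2Ac : c ≤ W2A.card + (Tv.card + 1) := by
      have h1 : W2A.card +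
          (Finset.univ.filter (fun w : Fin c => ¬(vsy w ∉ T ∧ w ≠ u))).card = c := by
        have h := Finset.card_filter_add_card_filter_not
          (s := (Finset.univ : Finset (Fin c))) (fun w : Fin c => vsy w ∉ T ∧ w ≠ u)
        rw [Finset.card_univ, Fintype.card_fin] at h
        exact h
      have h2 : (Finset.univ.filter (fun w : Fin c => ¬(vsy w ∉ T ∧ w ≠ u))).card ≤
          (insert σ Tv).card := by
        apply Finset.card_le_card_of_injOn vsy
        · intro w hw
          rw [Finset.mem_coe, Finset.mem_filter] at hw
          have hw2 := hw.2
          by_cases hwT : vsy w ∈ T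
          · apply Finset.mem_insert_of_mem
            rw [hTvdef]
            exact Finset.mem_filter.mpr ⟨hwT, w.2⟩
          · have hwu : w = u := by
              by_contra hne
              exact hw2 ⟨hwT, hne⟩
            rw [hwu, ← hσu]
            exact Finset.mem_insert_self σ Tv
        · exact fun a _ b _ h => vsy_inj h
      have h3 := Finset.card_insert_le σ Tv
      omega
    have hW2Bc : r ≤ W2B.card + Tc.card := by
      have h1 : W2B.card +
          (Finset.univ.filter (fun h' : Fin r => ¬ csy h' ∉ T)).card = r := by
        have h := Finset.card_filter_add_card_filter_not
          (s := (Finset.univ : Finset (Fin r))) (fun h' : Fin r => csy h' ∉ T)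
        rw [Finset.card_univ, Fintype.card_fin] at h
        exact h
      have h2 : (Finset.univ.filter (fun h' : Fin r => ¬ csy h' ∉ T)).card ≤ Tc.card := by
        apply Finset.card_le_card_of_injOn csy
        · intro h' hh
          rw [Finset.mem_coe, Finset.mem_filter, not_not] at hh
          rw [hTcdef]
          refine Finset.mem_filter.mpr ⟨hh.2, ?_⟩
          have : (csy h').1 = c + h'.1 := rfl
          omega
        · exact fun a _ b _ h => csy_inj h
      omega
    have hselA : ∀ w : {x : Fin c // x ∈ W2A}, ∃ m : Fin (c - 1), skipf c w.1 m.1 = u := by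
      intro w
      have hwu : w.1 ≠ u := (Finset.mem_filter.mp w.2).2.2
      obtain ⟨m, hm1, hm2⟩ := skipf_surj (Ne.symm hwu)
      exact ⟨⟨m, by omega⟩, hm2⟩
    choose selA hselA' using hselA
    have hselB : ∀ hh : {x : Fin r // x ∈ W2B},
        ∃ j : Fin (c - 1 + k hh.1), secv hh.1 j.1 = σ := by
      intro hh
      exact hsel2 hh.1 σ (by rw [hσu]; exact vsy_ne_csy u hh.1)
    choose selB hselB' using hselB
    set G1 := Finset.univ.image (fun m : Fin (c - 1) => (Sum.inl (u, m) : pIdx c r k))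
      with hG1def
    set G2 := W2A.attach.image (fun w => (Sum.inl (w.1, selA w) : pIdx c r k)) with hG2def
    set G3 := W2B.attach.image (fun hh => (Sum.inr ⟨hh.1, selB hh⟩ : pIdx c r k)) with hG3def
    have hG1c : G1.card = c - 1 := by
      rw [hG1def, Finset.card_image_of_injective _ (fun a b h => by simpa using h),
        Finset.card_univ, Fintype.card_fin]
    have hG2c : G2.card = W2A.card := by
      rw [hG2def, Finset.card_image_of_injOn, Finset.card_attach]
      intro a _ b _ h
      simp only [Sum.inl.injEq, Prod.mk.injEq] at h
      exact Subtype.ext h.1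
    have hG3c : G3.card = W2B.card := by
      rw [hG3def, Finset.card_image_of_injOn, Finset.card_attach]
      intro a _ b _ h
      simp only [Sum.inr.injEq] at h
      exact Subtype.ext (congrArg Sigma.fst h)
    have hd12 : Disjoint G1 G2 := by
      rw [Finset.disjoint_left]
      intro x hx1 hx2
      rw [hG1def] at hx1
      rw [hG2def] at hx2
      obtain ⟨m, -, rfl⟩ := Finset.mem_image.mp hx1
      obtain ⟨w, -, hw⟩ := Finset.mem_image.mp hx2
      simp only [Sum.inl.injEq, Prod.mk.injEq] at hw
      exact (Finset.mem_filter.mp w.2).2.2 hw.1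
    have hd3 : Disjoint (G1 ∪ G2) G3 := by
      rw [Finset.disjoint_left]
      intro x hx1 hx2
      rw [hG3def] at hx2
      obtain ⟨hh, -, rfl⟩ := Finset.mem_image.mp hx2
      rcases Finset.mem_union.mp hx1 with h1 | h2
      · rw [hG1def] at h1
        obtain ⟨m, -, hm⟩ := Finset.mem_image.mp h1
        exact Sum.inl_ne_inr hm
      · rw [hG2def] at h2
        obtain ⟨w, -, hw⟩ := Finset.mem_image.mp h2
        exact Sum.inl_ne_inr hw
    have hsub : G1 ∪ G2 ∪ G3 ⊆ Finset.univ.filter (fun i : pIdx c r k =>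
        ∀ τ ∈ T, ((g i).symm σ < (g i).symm τ)) := by
      intro i hi
      rw [Finset.mem_filter]
      refine ⟨Finset.mem_univ _, ?_⟩
      rcases Finset.mem_union.mp hi with hi' | hi'
      · rcases Finset.mem_union.mp hi' with h1 | h2
        · rw [hG1def] at h1
          obtain ⟨m, -, rfl⟩ := Finset.mem_image.mp h1
          intro τ hτ
          have hτσ : τ ≠ σ := fun he => hσT (he ▸ hτ)
          refine lt_of (gA u m) τ 0 hτσ ?_ (fun y hy => absurd hy (by omega))
          rw [hσu]
          exact hA0 u m
        · rw [hG2def] at h2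
          obtain ⟨w, -, rfl⟩ := Finset.mem_image.mp h2
          intro τ hτ
          have hτσ : τ ≠ σ := fun he => hσT (he ▸ hτ)
          have hwmem := Finset.mem_filter.mp w.2
          refine lt_of (gA w.1 (selA w)) τ 1 hτσ ?_ ?_
          · have h1 := hA1 w.1 (selA w)
            rw [hselA' w] at h1
            rw [hσu]
            exact h1
          · intro y hy
            have h0 := hA0 w.1 (selA w)
            have hyw : y = vsy w.1 := val_inj (gA w.1 (selA w)) y (vsy w.1) (by omega)
            rw [hyw]
            exact fun he => hwmem.2.1 (he ▸ hτ)
      · rw [hG3def] at hi'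
        obtain ⟨hh, -, rfl⟩ := Finset.mem_image.mp hi'
        intro τ hτ
        have hτσ : τ ≠ σ := fun he => hσT (he ▸ hτ)
        have hhmem := Finset.mem_filter.mp hh.2
        refine lt_of (gB hh.1 (selB hh).1) τ 1 hτσ ?_ ?_
        · have h1 := hB1 hh.1 (selB hh).1
          rw [hselB' hh] at h1
          exact h1
        · intro y hy
          have h0 := hB0 hh.1 (selB hh).1
          have hyc : y = csy hh.1 := val_inj (gB hh.1 (selB hh).1) y (csy hh.1) (by omega)
          rw [hyc]
          exact fun he => hhmem.2 (he ▸ hτ)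
    calc t - T.card ≤ (G1 ∪ G2 ∪ G3).card := by
          rw [Finset.card_union_of_disjoint hd3, Finset.card_union_of_disjoint hd12,
            hG1c, hG2c, hG3c]
          omega
      _ ≤ _ := Finset.card_le_card hsub
  · -- color symbol case
    have hσlt := σ.2
    set co : Fin r := ⟨σ.1 - c, by omega⟩ with hco
    have hσco : σ = csy co := by
      refine Fin.ext ?_
      have : (csy co).1 = c + (σ.1 - c) := rfl
      omega
    set W2 := Finset.univ.filter (fun h' : Fin r => csy h' ∉ T ∧ h' ≠ co) with hW2def
    set Sv := Finset.univ.filter (fun w : Fin c => vsy w ∉ T) with hSvdef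
    set ES := (Sv ×ˢ Sv).filter (fun p : Fin c × Fin c => p.1 < p.2 ∧ co ∉ χ s(p.1, p.2))
      with hESdef
    have hW2c : r ≤ W2.card + (Tc.card + 1) := by
      have h1 : W2.card +
          (Finset.univ.filter (fun h' : Fin r => ¬(csy h' ∉ T ∧ h' ≠ co))).card = r := by
        have h := Finset.card_filter_add_card_filter_not
          (s := (Finset.univ : Finset (Fin r))) (fun h' : Fin r => csy h' ∉ T ∧ h' ≠ co)
        rw [Finset.card_univ, Fintype.card_fin] at h
        exact h
      have h2 : (Finset.univ.filter (fun h' : Fin r => ¬(csy h' ∉ T ∧ h' ≠ co))).card ≤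
          (insert σ Tc).card := by
        apply Finset.card_le_card_of_injOn csy
        · intro h' hh
          rw [Finset.mem_coe, Finset.mem_filter] at hh
          have hh2 := hh.2
          by_cases hhT : csy h' ∈ T
          · apply Finset.mem_insert_of_mem
            rw [hTcdef]
            refine Finset.mem_filter.mpr ⟨hhT, ?_⟩
            have : (csy h').1 = c + h'.1 := rfl
            omega
          · have hhco : h' = co := by
              by_contra hne
              exact hh2 ⟨hhT, hne⟩
            rw [hhco, ← hσco]
            exact Finset.mem_insert_self σ Tc
        · exact fun a _ b _ h => csy_inj h
      have h3 := Finset.card_insert_le σ Tc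
      omega
    have hSvc : c ≤ Sv.card + Tv.card := by
      have h1 : Sv.card +
          (Finset.univ.filter (fun w : Fin c => ¬ vsy w ∉ T)).card = c := by
        have h := Finset.card_filter_add_card_filter_not
          (s := (Finset.univ : Finset (Fin c))) (fun w : Fin c => vsy w ∉ T)
        rw [Finset.card_univ, Fintype.card_fin] at h
        exact h
      have h2 : (Finset.univ.filter (fun w : Fin c => ¬ vsy w ∉ T)).card ≤ Tv.card := by
        apply Finset.card_le_card_of_injOn vsy
        · intro w hw
          rw [Finset.mem_coe, Finset.mem_filter, not_not] at hw
          rw [hTvdef]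
          exact Finset.mem_filter.mpr ⟨hw.2, w.2⟩
        · exact fun a _ b _ h => vsy_inj h
      omega
    have hES : Sv.card ≤ ES.card + k co := by
      rw [hESdef]
      exact indep_bound χ co (k co) (hmono co) Sv
    have hselB2 : ∀ hh : {x : Fin r // x ∈ W2},
        ∃ j : Fin (c - 1 + k hh.1), secv hh.1 j.1 = σ := by
      intro hh
      refine hsel2 hh.1 σ ?_
      rw [hσco]
      intro he
      exact (Finset.mem_filter.mp hh.2).2.2 (csy_inj he).symm
    choose selB2 hselB2' using hselB2
    have hselE : ∀ p : {x : Fin c × Fin c // x ∈ ES},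
        ∃ q : Fin c × Fin (c - 1), θ q.1 (skipf c q.1 q.2.1) = co ∧
          ((q.1 = p.1.1 ∧ skipf c q.1 q.2.1 = p.1.2) ∨
           (q.1 = p.1.2 ∧ skipf c q.1 q.2.1 = p.1.1)) := by
      intro p
      have hpm := Finset.mem_filter.mp p.2
      have hlt : p.1.1 < p.1.2 := hpm.2.1
      have hnm : co ∉ χ s(p.1.1, p.1.2) := hpm.2.2
      have hne : p.1.1 ≠ p.1.2 := ne_of_lt hlt
      have hltv : p.1.1.1 < p.1.2.1 := hlt
      rcases θ_cases p.1.1 p.1.2 hltv co hnm with hθ | hθ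
      · obtain ⟨m, hm1, hm2⟩ := skipf_surj (Ne.symm hne)
        refine ⟨(p.1.1, ⟨m, by omega⟩), ?_, Or.inl ⟨rfl, ?_⟩⟩
        · show θ p.1.1 (skipf c p.1.1 m) = co
          rw [hm2]
          exact hθ
        · exact hm2
      · obtain ⟨m, hm1, hm2⟩ := skipf_surj hne
        refine ⟨(p.1.2, ⟨m, by omega⟩), ?_, Or.inr ⟨rfl, ?_⟩⟩
        · show θ p.1.2 (skipf c p.1.2 m) = co
          rw [hm2]
          exact hθ
        · exact hm2
    choose selE hselE1 hselE2 using hselE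
    set G1 := Finset.univ.image (fun j : Fin (c - 1 + k co) => (Sum.inr ⟨co, j⟩ : pIdx c r k))
      with hG1def
    set G2 := W2.attach.image (fun hh => (Sum.inr ⟨hh.1, selB2 hh⟩ : pIdx c r k)) with hG2def
    set G3 := ES.attach.image (fun p => (Sum.inl (selE p) : pIdx c r k)) with hG3def
    have hG1c : G1.card = c - 1 + k co := by
      rw [hG1def, Finset.card_image_of_injective _ (fun a b h => by simpa using h),
        Finset.card_univ, Fintype.card_fin]
    have hG2c : G2.card = W2.card := by
      rw [hG2def, Finset.card_image_of_injOn, Finset.card_attach]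
      intro a _ b _ h
      simp only [Sum.inr.injEq] at h
      exact Subtype.ext (congrArg Sigma.fst h)
    have hG3c : G3.card = ES.card := by
      rw [hG3def, Finset.card_image_of_injOn, Finset.card_attach]
      intro a _ b _ h
      simp only [Sum.inl.injEq] at h
      have hpa := Finset.mem_filter.mp a.2
      have hpb := Finset.mem_filter.mp b.2
      have hlta : a.1.1.1 < a.1.2.1 := hpa.2.1
      have hltb : b.1.1.1 < b.1.2.1 := hpb.2.1
      have h2a := hselE2 a
      have h2b := hselE2 b
      rw [h] at h2a
      apply Subtype.ext
      rcases h2a with ⟨ha1, ha2⟩ | ⟨ha1, ha2⟩ <;> rcases h2b with ⟨hb1, hb2⟩ | ⟨hb1, hb2⟩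
      · have e1 : a.1.1 = b.1.1 := by rw [← ha1, hb1]
        have e2 : a.1.2 = b.1.2 := by rw [← ha2, hb2]
        exact Prod.ext e1 e2
      · exfalso
        have e1 : a.1.1 = b.1.2 := by rw [← ha1, hb1]
        have e2 : a.1.2 = b.1.1 := by rw [← ha2, hb2]
        have v1 := congrArg Fin.val e1
        have v2 := congrArg Fin.val e2
        omega
      · exfalso
        have e1 : a.1.2 = b.1.1 := by rw [← ha1, hb1]
        have e2 : a.1.1 = b.1.2 := by rw [← ha2, hb2]
        have v1 := congrArg Fin.val e1
        have v2 := congrArg Fin.val e2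
        omega
      · have e1 : a.1.2 = b.1.2 := by rw [← ha1, hb1]
        have e2 : a.1.1 = b.1.1 := by rw [← ha2, hb2]
        exact Prod.ext e2 e1
    have hd12 : Disjoint G1 G2 := by
      rw [Finset.disjoint_left]
      intro x hx1 hx2
      rw [hG1def] at hx1
      rw [hG2def] at hx2
      obtain ⟨j, -, rfl⟩ := Finset.mem_image.mp hx1
      obtain ⟨hh, -, hw⟩ := Finset.mem_image.mp hx2
      simp only [Sum.inr.injEq] at hw
      exact (Finset.mem_filter.mp hh.2).2.2 (congrArg Sigma.fst hw)
    have hd3 : Disjoint (G1 ∪ G2) G3 := by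
      rw [Finset.disjoint_left]
      intro x hx1 hx2
      rw [hG3def] at hx2
      obtain ⟨p, -, rfl⟩ := Finset.mem_image.mp hx2
      rcases Finset.mem_union.mp hx1 with h1 | h2
      · rw [hG1def] at h1
        obtain ⟨j, -, hm⟩ := Finset.mem_image.mp h1
        exact Sum.inr_ne_inl hm
      · rw [hG2def] at h2
        obtain ⟨hh, -, hw⟩ := Finset.mem_image.mp h2
        exact Sum.inr_ne_inl hw
    have hsub : G1 ∪ G2 ∪ G3 ⊆ Finset.univ.filter (fun i : pIdx c r k =>
        ∀ τ ∈ T, ((g i).symm σ < (g i).symm τ)) := by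
      intro i hi
      rw [Finset.mem_filter]
      refine ⟨Finset.mem_univ _, ?_⟩
      rcases Finset.mem_union.mp hi with hi' | hi'
      · rcases Finset.mem_union.mp hi' with h1 | h2
        · rw [hG1def] at h1
          obtain ⟨j, -, rfl⟩ := Finset.mem_image.mp h1
          intro τ hτ
          have hτσ : τ ≠ σ := fun he => hσT (he ▸ hτ)
          refine lt_of (gB co j.1) τ 0 hτσ ?_ (fun y hy => absurd hy (by omega))
          rw [hσco]
          exact hB0 co j.1
        · rw [hG2def] at h2
          obtain ⟨hh, -, rfl⟩ := Finset.mem_image.mp h2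
          intro τ hτ
          have hτσ : τ ≠ σ := fun he => hσT (he ▸ hτ)
          have hhmem := Finset.mem_filter.mp hh.2
          refine lt_of (gB hh.1 (selB2 hh).1) τ 1 hτσ ?_ ?_
          · have h1 := hB1 hh.1 (selB2 hh).1
            rw [hselB2' hh] at h1
            exact h1
          · intro y hy
            have h0 := hB0 hh.1 (selB2 hh).1
            have hyc : y = csy hh.1 := val_inj (gB hh.1 (selB2 hh).1) y (csy hh.1) (by omega)
            rw [hyc]
            exact fun he => hhmem.2.1 (he ▸ hτ)
      · rw [hG3def] at hi'
        obtain ⟨p, -, rfl⟩ := Finset.mem_image.mp hi'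
        intro τ hτ
        have hτσ : τ ≠ σ := fun he => hσT (he ▸ hτ)
        have hpm := Finset.mem_filter.mp p.2
        have hp1 : p.1.1 ∈ Sv := (Finset.mem_product.mp hpm.1).1
        have hp2 : p.1.2 ∈ Sv := (Finset.mem_product.mp hpm.1).2
        have hv1 : vsy p.1.1 ∉ T := (Finset.mem_filter.mp hp1).2
        have hv2 : vsy p.1.2 ∉ T := (Finset.mem_filter.mp hp2).2
        refine lt_of (gA (selE p).1 (selE p).2) τ 2 hτσ ?_ ?_
        · have h2 := hA2 (selE p).1 (selE p).2
          rw [hselE1 p] at h2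
          rw [hσco]
          exact h2
        · intro y hy
          have h0 := hA0 (selE p).1 (selE p).2
          have h1 := hA1 (selE p).1 (selE p).2
          have hy01 : ((gA (selE p).1 (selE p).2).symm y).1 = 0 ∨
              ((gA (selE p).1 (selE p).2).symm y).1 = 1 := by omega
          rcases hy01 with hcase | hcase
          · have hyv : y = vsy (selE p).1 :=
              val_inj (gA (selE p).1 (selE p).2) y (vsy (selE p).1) (by omega)
            rw [hyv]
            rcases hselE2 p with ⟨hq1, -⟩ | ⟨hq1, -⟩
            · rw [hq1]
              exact fun he => hv1 (he ▸ hτ)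
            · rw [hq1]
              exact fun he => hv2 (he ▸ hτ)
          · have hyv : y = vsy (skipf c (selE p).1 (selE p).2.1) :=
              val_inj (gA (selE p).1 (selE p).2) y (vsy (skipf c (selE p).1 (selE p).2.1))
                (by omega)
            rw [hyv]
            rcases hselE2 p with ⟨-, hq2⟩ | ⟨-, hq2⟩
            · rw [hq2]
              exact fun he => hv2 (he ▸ hτ)
            · rw [hq2]
              exact fun he => hv1 (he ▸ hτ)
    calc t - T.card ≤ (G1 ∪ G2 ∪ G3).card := by
          rw [Finset.card_union_of_disjoint hd3, Finset.card_union_of_disjoint hd12,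
            hG1c, hG2c, hG3c]
          have hkco := hk co
          omega
      _ ≤ _ := Finset.card_le_card hsub

/-- Let `δ ∈ {0,1}`, `α ≥ 3`, `t = 2s+δ`, `v = s+α`, `c = s+δ+2−α`, `r = 2α−δ−2`.
If `k₁,…,k_r ≥ r` sum to `l` and there is an `(r; r−2)`-coloring of `K_c` with no
monochromatic clique of `k_h+1` vertices in color `h` (i.e. `c < R^{r−2}(k₁+1,…,k_r+1)`),
then an `(v(c−1)+l, v, t)`-suitable core exists. -/
theorem stmt15 (δ α s c r : ℕ) (hδ : δ = 0 ∨ δ = 1) (hα : 3 ≤ α)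
    (hc : (c : ℤ) = (s : ℤ) + δ + 2 - α) (hr : r = 2 * α - δ - 2)
    (l : ℕ) (hl : 0 < l) (k : Fin r → ℕ) (hk : ∀ h, r ≤ k h) (hsum : ∑ h, k h = l)
    (χ : Sym2 (Fin c) → Finset (Fin r)) (hχ : ∀ e, (χ e).card = r - 2)
    (hmono : ∀ h : Fin r, ¬ HasMonoClique χ h (k h + 1)) :
    SuitableCoreExists ((s + α) * (c - 1) + l) (s + α) (2 * s + δ) := by
  have hδ1 : δ ≤ 1 := by rcases hδ with h | h <;> omega
  have hca : s + α = c + r := by omega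
  rw [show s + α = c + r from hca]
  exact main_core c r (2 * s + δ) l (by omega) (by omega) k hk hsum χ hχ hmono
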